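/- Let U ⊆ ℂᵐ be open, let F : U → ℂⁿ be holomorphic satisfying the conformality condition, and let f = Re ∘ F : U → ℝⁿ, with real differential df(z)(v) = Re(DF(z)(v)). Then the pullback metric has the expression: for every z ∈ U and all v, w ∈ ℂᵐ, ⟨df(z)(v), df(z)(w)⟩ = (1/2) · Re(∑_{i=1}^{n} ω_i(z)(v) · conj(ω_i(z)(w))). -/

import Mathlib

/-- For a holomorphic `F : U → ℂⁿ` satisfying the conformality condition, the
pullback metric of `f = Re ∘ F` is given by
`⟨df(z)(v), df(z)(w)⟩ = (1/2)·Re(∑ᵢ ωᵢ(z)(v)·conj(ωᵢ(z)(w)))`. -/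
theorem pullback_metric_eq_half_re_hermitian
    (m n : ℕ) (U : Set (Fin m → ℂ)) (hU : IsOpen U)
    (F : (Fin m → ℂ) → (Fin n → ℂ)) (hF : DifferentiableOn ℂ F U)
    (hconf : ∀ z ∈ U, ∀ v w : Fin m → ℂ,
      ∑ i, fderiv ℂ F z v i * fderiv ℂ F z w i = 0)
    (df : (Fin m → ℂ) → (Fin m → ℂ) → EuclideanSpace ℝ (Fin n))
    (hdf : ∀ z v, df z v = fun i => (fderiv ℂ F z v i).re) :
    ∀ z ∈ U, ∀ v w : Fin m → ℂ,
      @inner ℝ (EuclideanSpace ℝ (Fin n)) _ (df z v) (df z w) =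
        (1 / 2) * (∑ i, fderiv ℂ F z v i * (starRingEnd ℂ) (fderiv ℂ F z w i)).re := by
  intro z hz v w
  have h0 : (∑ i, fderiv ℂ F z v i * fderiv ℂ F z w i).re = 0 := by
    rw [hconf z hz v w]; simp
  rw [PiLp.inner_apply, hdf, hdf]
  simp only [RCLike.inner_apply, starRingEnd_apply, star_trivial]
  rw [Complex.re_sum] at h0 ⊢
  have key : ∀ i : Fin n,
      (fderiv ℂ F z v i).re * (fderiv ℂ F z w i).re =
        (1/2) * ((fderiv ℂ F z v i * (starRingEnd ℂ) (fderiv ℂ F z w i)).re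
          + (fderiv ℂ F z v i * fderiv ℂ F z w i).re) := by
    intro i
    simp [Complex.mul_re, Complex.conj_re, Complex.conj_im]
    ring
  rw [show (∑ x, (fderiv ℂ F z w x).re * (fderiv ℂ F z v x).re) = ∑ i, (fderiv ℂ F z v i).re * (fderiv ℂ F z w i).re from Finset.sum_congr rfl fun i _ => mul_comm _ _]
  calc ∑ i, (fderiv ℂ F z v i).re * (fderiv ℂ F z w i).re
      = ∑ i, (1/2) * ((fderiv ℂ F z v i * (starRingEnd ℂ) (fderiv ℂ F z w i)).re
          + (fderiv ℂ F z v i * fderiv ℂ F z w i).re) := by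
        exact Finset.sum_congr rfl fun i _ => key i
    _ = (1/2) * (∑ i, (fderiv ℂ F z v i * (starRingEnd ℂ) (fderiv ℂ F z w i)).re
          + ∑ i, (fderiv ℂ F z v i * fderiv ℂ F z w i).re) := by
        rw [← Finset.mul_sum, Finset.sum_add_distrib]
    _ = (1/2) * ∑ i, (fderiv ℂ F z v i * (starRingEnd ℂ) (fderiv ℂ F z w i)).re := by
        rw [h0]; ring
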